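/- Let M ⊆ ℝ^D be a nonempty closed set, let t₀ > 0, τ ∈ (0, t₀), and ε ≥ 0. Let X : ℝ → ℝ^D be differentiable at every point of [0, t₀ − τ], let π : ℝ^D → ℝ^D be a map such that for every t ∈ [0, t₀ − τ] the point π(X(t)) is a nearest point of X(t) in M, i.e. π(X(t)) ∈ M and ‖X(t) − π(X(t))‖ = infDist(X(t), M), and let e : ℝ → ℝ^D satisfy ‖e(t)‖ ≤ ε for all t ∈ [0, t₀ − τ]. Suppose X solves X′(t) = ( −( X(t) − π(X(t)) ) + e(t) ) / ( 2(t₀ − t) ) for all t ∈ [0, t₀ − τ], and suppose additionally that infDist( X(0), M ) ≥ √2 · ε. Then the total displacement of the trajectory satisfies ‖ X(t₀ − τ) − X(0) ‖ ≤ infDist( X(0), M ) + ( (1 + √2)/2 ) · ε · log( t₀ / τ ). -/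

import Mathlib

open Set Metric Filter

local notation "⟪" x ", " y "⟫" => @inner ℝ _ _ x y

set_option maxHeartbeats 1000000 in
/-- Terminal-time path-length bound: the total displacement of the trajectory of the
terminal-time probability-flow ODE is bounded by the initial distance to `M` plus a
logarithmic error term. -/
theorem terminal_path_length {D : ℕ}
    (M : Set (EuclideanSpace ℝ (Fin D))) (hM : M.Nonempty) (hMcl : IsClosed M)
    (t₀ τ ε : ℝ) (ht₀ : 0 < t₀) (hτ : τ ∈ Ioo (0 : ℝ) t₀) (hε : 0 ≤ ε)
    (X : ℝ → EuclideanSpace ℝ (Fin D))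
    (π : EuclideanSpace ℝ (Fin D) → EuclideanSpace ℝ (Fin D))
    (hπ : ∀ t ∈ Icc (0 : ℝ) (t₀ - τ),
      π (X t) ∈ M ∧ ‖X t - π (X t)‖ = infDist (X t) M)
    (e : ℝ → EuclideanSpace ℝ (Fin D))
    (he : ∀ t ∈ Icc (0 : ℝ) (t₀ - τ), ‖e t‖ ≤ ε)
    (hflow : ∀ t ∈ Icc (0 : ℝ) (t₀ - τ),
      HasDerivAt X ((2 * (t₀ - t))⁻¹ • (-(X t - π (X t)) + e t)) t)
    (hinit : Real.sqrt 2 * ε ≤ infDist (X 0) M) :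
    ‖X (t₀ - τ) - X 0‖ ≤
      infDist (X 0) M + ((1 + Real.sqrt 2) / 2) * ε * Real.log (t₀ / τ) := by
  obtain ⟨hτ0, hτt₀⟩ := hτ
  set T : ℝ := t₀ - τ with hT
  have hT0 : (0:ℝ) ≤ T := by simp [hT]; linarith
  set d0 : ℝ := infDist (X 0) M with hd0
  have hd0nn : 0 ≤ d0 := infDist_nonneg
  set f : ℝ → ℝ := fun t => infDist (X t) M with hfdef
  have hpos : ∀ x ∈ Icc (0:ℝ) T, 0 < t₀ - x := by
    intro x hx; have := hx.2; simp [hT] at this ⊢; linarith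
  have hXc : ContinuousOn X (Icc 0 T) :=
    fun x hx => (hflow x hx).continuousAt.continuousWithinAt
  have hfc : ContinuousOn f (Icc 0 T) :=
    (continuous_infDist_pt M).comp_continuousOn hXc
  have hfnn : ∀ t, 0 ≤ f t := fun t => infDist_nonneg
  -- Dini-type slope bound for the distance along the flow
  have dini : ∀ x ∈ Ico (0:ℝ) T, ∀ r, (ε - f x) / (2 * (t₀ - x)) < r →
      ∃ᶠ z in nhdsWithin x (Ioi x), slope f x z < r := by
    intro x hx r hr
    have hxI : x ∈ Icc (0:ℝ) T := Ico_subset_Icc_self hx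
    have hx0 : 0 < t₀ - x := hpos x hxI
    obtain ⟨hpM, hpn⟩ := hπ x hxI
    set p := π (X x) with hp
    set V := (2 * (t₀ - x))⁻¹ • (-(X x - p) + e x) with hV
    have hXd : HasDerivAt X V x := hflow x hxI
    have hfle : ∀ z, f z ≤ ‖X z - p‖ := fun z => by
      rw [← dist_eq_norm]; exact infDist_le_dist_of_mem hpM
    have hub : ∀ᶠ z in nhdsWithin x (Ioi x), slope f x z < r := by
      rcases eq_or_lt_of_le (hfnn x) with h0 | h0
      · -- distance zero at x
        have hXp0 : X x - p = 0 := by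
          have h0' : ‖X x - p‖ = 0 := by rw [hpn]; exact h0.symm
          exact norm_eq_zero.mp h0'
        have hXp : X x = p := sub_eq_zero.mp hXp0
        have hVr : ‖V‖ < r := by
          have h1 : ‖V‖ ≤ (2 * (t₀ - x))⁻¹ * ε := by
            rw [hV, hXp0, neg_zero, zero_add, norm_smul]
            have : |(2 * (t₀ - x))⁻¹| = (2 * (t₀ - x))⁻¹ := by
              rw [abs_of_pos]; positivity
            rw [Real.norm_eq_abs, this]
            exact mul_le_mul_of_nonneg_left (he x hxI) (by positivity)
          have h2 : (2 * (t₀ - x))⁻¹ * ε = (ε - f x) / (2 * (t₀ - x)) := by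
            rw [← h0]; ring
          linarith
        have hts : Tendsto (fun z => ‖slope X x z‖) (nhdsWithin x {x}ᶜ) (nhds ‖V‖) :=
          (continuous_norm.tendsto V).comp (hasDerivAt_iff_tendsto_slope.1 hXd)
        have hev : ∀ᶠ z in nhdsWithin x {x}ᶜ, ‖slope X x z‖ < r :=
          hts.eventually_lt_const hVr
        have hev' : ∀ᶠ z in nhdsWithin x (Ioi x), ‖slope X x z‖ < r :=
          nhdsWithin_mono x (fun z hz => ne_of_gt hz) hev
        filter_upwards [hev', self_mem_nhdsWithin] with z hz hz'
        have hzx : 0 < z - x := sub_pos.2 hz'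
        have h3 : slope f x z ≤ ‖slope X x z‖ := by
          have h4 : f z - f x ≤ ‖X z - X x‖ := by
            have h5 := hfle z
            rw [← hXp] at h5
            linarith
          have h6 : ‖slope X x z‖ = ‖X z - X x‖ / (z - x) := by
            rw [slope, vsub_eq_sub, norm_smul, Real.norm_eq_abs, abs_of_pos (inv_pos.2 hzx),
              div_eq_inv_mul]
          rw [slope_def_field, h6]
          exact div_le_div_of_nonneg_right h4 hzx.le
        exact lt_of_le_of_lt h3 hz
      · -- distance positive at x
        set d := f x with hd
        have hdn : ‖X x - p‖ = d := hpn
        set q : ℝ → ℝ := fun t => d + (2 * d)⁻¹ * (⟪X t - p, X t - p⟫ - d ^ 2) with hq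
        have hXpd : HasDerivAt (fun t => X t - p) V x := hXd.sub_const p
        have hqd : HasDerivAt q ((2 * d)⁻¹ * (⟪X x - p, V⟫ + ⟪V, X x - p⟫)) x := by
          have h1 := (hXpd.inner ℝ hXpd)
          exact ((h1.sub_const (d ^ 2)).const_mul ((2 * d)⁻¹)).const_add d
        have hinner : ⟪X x - p, V⟫ + ⟪V, X x - p⟫ = 2 * ⟪X x - p, V⟫ := by
          rw [real_inner_comm V (X x - p)]; ring
        have hipbound : ⟪X x - p, V⟫ ≤ (2 * (t₀ - x))⁻¹ * (d * (ε - d)) := by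
          rw [hV, real_inner_smul_right, inner_add_right, inner_neg_right,
            real_inner_self_eq_norm_sq, hdn]
          have h5 : ⟪X x - p, e x⟫ ≤ d * ε := by
            calc ⟪X x - p, e x⟫ ≤ ‖X x - p‖ * ‖e x‖ := real_inner_le_norm _ _
              _ ≤ d * ε := by
                  rw [hdn]; exact mul_le_mul_of_nonneg_left (he x hxI) (le_of_lt h0)
          have h6 : (0:ℝ) < (2 * (t₀ - x))⁻¹ := by positivity
          have : -d ^ 2 + ⟪X x - p, e x⟫ ≤ d * (ε - d) := by nlinarith
          exact mul_le_mul_of_nonneg_left this (le_of_lt h6)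
        have hdne : d ≠ 0 := ne_of_gt h0
        have hq' : (2 * d)⁻¹ * (⟪X x - p, V⟫ + ⟪V, X x - p⟫) < r := by
          rw [hinner]
          have h7 : ∀ y : ℝ, (2 * d)⁻¹ * (2 * y) = d⁻¹ * y := by
            intro y; field_simp
          rw [h7]
          have h8 : d⁻¹ * ⟪X x - p, V⟫ ≤ d⁻¹ * ((2 * (t₀ - x))⁻¹ * (d * (ε - d))) :=
            mul_le_mul_of_nonneg_left hipbound (by positivity)
          have h9 : d⁻¹ * ((2 * (t₀ - x))⁻¹ * (d * (ε - d))) = (ε - d) / (2 * (t₀ - x)) := by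
            field_simp
          rw [h9] at h8
          exact lt_of_le_of_lt h8 hr
        have hts : Tendsto (slope q x) (nhdsWithin x {x}ᶜ) _ :=
          hasDerivAt_iff_tendsto_slope.1 hqd
        have hev : ∀ᶠ z in nhdsWithin x {x}ᶜ, slope q x z < r :=
          hts.eventually_lt_const hq'
        have hev' : ∀ᶠ z in nhdsWithin x (Ioi x), slope q x z < r :=
          nhdsWithin_mono x (fun z hz => ne_of_gt hz) hev
        filter_upwards [hev', self_mem_nhdsWithin] with z hz hz'
        have hzx : 0 < z - x := sub_pos.2 hz'
        have hqx : q x = d := by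
          simp only [hq, real_inner_self_eq_norm_sq, hdn]; ring
        have hfq : f z ≤ q z := by
          have h10 : f z ≤ ‖X z - p‖ := hfle z
          have h11 : ‖X z - p‖ ≤ q z := by
            have hy : (⟪X z - p, X z - p⟫ : ℝ) = ‖X z - p‖ ^ 2 :=
              real_inner_self_eq_norm_sq _
            show ‖X z - p‖ ≤ d + (2 * d)⁻¹ * (⟪X z - p, X z - p⟫ - d ^ 2)
            rw [hy, ← sub_nonneg]
            have h12 : d + (2 * d)⁻¹ * (‖X z - p‖ ^ 2 - d ^ 2) - ‖X z - p‖
                = (2 * d)⁻¹ * ((‖X z - p‖ - d) ^ 2) := by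
              field_simp; ring
            rw [h12]
            exact mul_nonneg (inv_nonneg.2 (by linarith)) (sq_nonneg _)
          linarith
        have h13 : slope f x z ≤ slope q x z := by
          rw [slope_def_field, slope_def_field, hqx, ← hd]
          exact div_le_div_of_nonneg_right (by linarith) hzx.le
        exact lt_of_le_of_lt h13 hz
    exact hub.frequently
  -- the in-flight distance estimate
  set c : ℝ := d0 / Real.sqrt t₀ with hc
  have hcnn : 0 ≤ c := div_nonneg hd0nn (Real.sqrt_nonneg _)
  have hst₀ : Real.sqrt t₀ ≠ 0 := ne_of_gt (Real.sqrt_pos.2 ht₀)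
  have hct : c * Real.sqrt t₀ = d0 := by rw [hc]; exact div_mul_cancel₀ d0 hst₀
  clear_value c
  have hsqrtpos : ∀ x ∈ Icc (0:ℝ) T, 0 < Real.sqrt (t₀ - x) :=
    fun x hx => Real.sqrt_pos.2 (hpos x hx)
  have hsqd : ∀ x ∈ Icc (0:ℝ) T,
      HasDerivAt (fun s => Real.sqrt (t₀ - s)) (-(2 * Real.sqrt (t₀ - x))⁻¹) x := by
    intro x hx
    have h1 : HasDerivAt (fun s : ℝ => t₀ - s) (-1) x := by
      simpa using (hasDerivAt_id x).const_sub t₀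
    have h2 := (Real.hasDerivAt_sqrt (ne_of_gt (hpos x hx))).comp x h1
    refine h2.congr_deriv ?_
    ring
  have key : ∀ t ∈ Icc (0:ℝ) T, f t ≤ ε + c * Real.sqrt (t₀ - t) := by
    intro t ht
    have h1t : (0:ℝ) < 1 + t := by linarith [ht.1]
    by_contra hcon
    push_neg at hcon
    set δ : ℝ := (f t - (ε + c * Real.sqrt (t₀ - t))) / (2 * (1 + t)) with hδdef
    have hδ : 0 < δ := by
      apply div_pos; linarith; positivity
    clear_value δ
    set B : ℝ → ℝ := fun s => ε + c * Real.sqrt (t₀ - s) + δ * (1 + s) with hB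
    set B' : ℝ → ℝ := fun s => -(c * (2 * Real.sqrt (t₀ - s))⁻¹) + δ with hB'
    have hBd : ∀ x ∈ Icc (0:ℝ) T, HasDerivAt B (B' x) x := by
      intro x hx
      have h1 := ((hsqd x hx).const_mul c).const_add ε
      have h2 : HasDerivAt (fun s : ℝ => δ * (1 + s)) δ x := by
        simpa using ((hasDerivAt_id x).const_add (1:ℝ)).const_mul δ
      have := h1.add h2
      refine this.congr_deriv ?_
      simp [hB']
    have hcomp : f t ≤ B t := by
      refine image_le_of_liminf_slope_right_lt_deriv_boundary'
        (f' := fun x => (ε - f x) / (2 * (t₀ - x))) hfc dini ?_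
        (fun x hx => (hBd x hx).continuousAt.continuousWithinAt)
        (fun x hx => (hBd x (Ico_subset_Icc_self hx)).hasDerivWithinAt) ?_ ht
      · -- initial condition
        have hf0 : f 0 = d0 := rfl
        simp only [hB, sub_zero, hf0, hct]
        nlinarith
      · -- contact condition
        intro x hx hfx
        show (ε - f x) / (2 * (t₀ - x)) < B' x
        have hxI : x ∈ Icc (0:ℝ) T := Ico_subset_Icc_self hx
        have hx0 : 0 < t₀ - x := hpos x hxI
        have hsx : 0 < Real.sqrt (t₀ - x) := hsqrtpos x hxI
        have hss : Real.sqrt (t₀ - x) * Real.sqrt (t₀ - x) = t₀ - x :=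
          Real.mul_self_sqrt (le_of_lt hx0)
        rw [hfx]
        simp only [hB, hB']
        rw [div_lt_iff₀ (by positivity : (0:ℝ) < 2 * (t₀ - x))]
        have hx1 : (0:ℝ) ≤ x := hx.1
        have h2tx : 2 * (t₀ - x) = 2 * (Real.sqrt (t₀ - x) * Real.sqrt (t₀ - x)) := by
          rw [hss]
        have hexp : (-(c * (2 * Real.sqrt (t₀ - x))⁻¹) + δ) * (2 * (t₀ - x))
            = -(c * Real.sqrt (t₀ - x)) + δ * (2 * (t₀ - x)) := by
          rw [h2tx]
          have hsne : Real.sqrt (t₀ - x) ≠ 0 := ne_of_gt hsx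
          field_simp
        rw [hexp]
        nlinarith [mul_pos hδ hx0, mul_nonneg hδ.le hx1]
    have : f t ≤ ε + c * Real.sqrt (t₀ - t) + δ * (1 + t) := hcomp
    rw [hδdef] at this
    have h4 : (f t - (ε + c * Real.sqrt (t₀ - t))) / (2 * (1 + t)) * (1 + t)
        = (f t - (ε + c * Real.sqrt (t₀ - t))) / 2 := by
      field_simp
    rw [h4] at this
    linarith
  -- displacement bound via the speed estimate
  set B2 : ℝ → ℝ := fun t => ε * (Real.log t₀ - Real.log (t₀ - t))
      + c * (Real.sqrt t₀ - Real.sqrt (t₀ - t)) with hB2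
  set B2' : ℝ → ℝ := fun t => ε * (t₀ - t)⁻¹ + c * (2 * Real.sqrt (t₀ - t))⁻¹ with hB2'
  have hB2d : ∀ x ∈ Icc (0:ℝ) T, HasDerivAt B2 (B2' x) x := by
    intro x hx
    have hx0 : 0 < t₀ - x := hpos x hx
    have h1 : HasDerivAt (fun s : ℝ => t₀ - s) (-1) x := by
      simpa using (hasDerivAt_id x).const_sub t₀
    have h2 := (Real.hasDerivAt_log (ne_of_gt hx0)).comp x h1
    have h3 := ((h2.const_sub (Real.log t₀)).const_mul ε)
    have h4 := (((hsqd x hx).const_sub (Real.sqrt t₀)).const_mul c)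
    have := h3.add h4
    refine this.congr_deriv ?_
    simp [hB2']
  have hdisp : ∀ x ∈ Icc (0:ℝ) T, ‖X x - X 0‖ ≤ B2 x := by
    have hg : ContinuousOn (fun t => X t - X 0) (Icc 0 T) := hXc.sub continuousOn_const
    have hg' : ∀ x ∈ Ico (0:ℝ) T, HasDerivWithinAt (fun t => X t - X 0)
        ((2 * (t₀ - x))⁻¹ • (-(X x - π (X x)) + e x)) (Ici x) x := by
      intro x hx
      exact ((hflow x (Ico_subset_Icc_self hx)).sub_const (X 0)).hasDerivWithinAt
    refine image_norm_le_of_norm_deriv_right_le_deriv_boundary' hg hg' ?_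
      (fun x hx => (hB2d x hx).continuousAt.continuousWithinAt)
      (fun x hx => (hB2d x (Ico_subset_Icc_self hx)).hasDerivWithinAt) ?_
    · simp [hB2]
    · intro x hx
      have hxI : x ∈ Icc (0:ℝ) T := Ico_subset_Icc_self hx
      have hx0 : 0 < t₀ - x := hpos x hxI
      have hsx : 0 < Real.sqrt (t₀ - x) := hsqrtpos x hxI
      have hss : Real.sqrt (t₀ - x) * Real.sqrt (t₀ - x) = t₀ - x :=
        Real.mul_self_sqrt (le_of_lt hx0)
      have h5 : ‖(2 * (t₀ - x))⁻¹ • (-(X x - π (X x)) + e x)‖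
          ≤ (2 * (t₀ - x))⁻¹ * (f x + ε) := by
        rw [norm_smul, Real.norm_eq_abs, abs_of_pos (by positivity : (0:ℝ) < (2 * (t₀ - x))⁻¹)]
        apply mul_le_mul_of_nonneg_left _ (by positivity)
        calc ‖-(X x - π (X x)) + e x‖ ≤ ‖-(X x - π (X x))‖ + ‖e x‖ := norm_add_le _ _
          _ = ‖X x - π (X x)‖ + ‖e x‖ := by rw [norm_neg]
          _ ≤ f x + ε := by
              rw [(hπ x hxI).2]
              exact add_le_add le_rfl (he x hxI)
      have h6 : f x ≤ ε + c * Real.sqrt (t₀ - x) := key x hxI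
      have h7 : (2 * (t₀ - x))⁻¹ * (f x + ε)
          ≤ (2 * (t₀ - x))⁻¹ * (2 * ε + c * Real.sqrt (t₀ - x)) := by
        apply mul_le_mul_of_nonneg_left _ (by positivity)
        linarith
      have halg : ∀ s : ℝ, 0 < s →
          (2 * (s * s))⁻¹ * (2 * ε + c * s) = ε * (s * s)⁻¹ + c * (2 * s)⁻¹ := by
        intro s hs
        field_simp
      have h8 : (2 * (t₀ - x))⁻¹ * (2 * ε + c * Real.sqrt (t₀ - x)) = B2' x := by
        simp only [hB2']
        rw [show (2:ℝ) * (t₀ - x) = 2 * (Real.sqrt (t₀ - x) * Real.sqrt (t₀ - x)) from by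
            rw [hss],
          show (t₀ - x)⁻¹ = (Real.sqrt (t₀ - x) * Real.sqrt (t₀ - x))⁻¹ from by rw [hss]]
        exact halg _ hsx
      calc ‖(2 * (t₀ - x))⁻¹ • (-(X x - π (X x)) + e x)‖
          ≤ (2 * (t₀ - x))⁻¹ * (f x + ε) := h5
        _ ≤ (2 * (t₀ - x))⁻¹ * (2 * ε + c * Real.sqrt (t₀ - x)) := h7
        _ = B2' x := h8
  -- conclude
  have hfin := hdisp T ⟨hT0, le_rfl⟩
  have hTτ : t₀ - T = τ := by simp [hT]
  have hlog : Real.log t₀ - Real.log τ = Real.log (t₀ / τ) :=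
    (Real.log_div (ne_of_gt ht₀) (ne_of_gt hτ0)).symm
  have hlognn : 0 ≤ Real.log (t₀ / τ) := by
    apply Real.log_nonneg
    rw [le_div_iff₀ hτ0]; linarith
  have hsqrt2 : (1:ℝ) ≤ Real.sqrt 2 := by
    rw [show (1:ℝ) = Real.sqrt 1 by simp]
    exact Real.sqrt_le_sqrt (by norm_num)
  have hcsq : c * (Real.sqrt t₀ - Real.sqrt τ) ≤ d0 := by
    have h10 : 0 ≤ Real.sqrt τ := Real.sqrt_nonneg _
    nlinarith [mul_nonneg hcnn h10]
  have hB2T : B2 T = ε * Real.log (t₀ / τ) + c * (Real.sqrt t₀ - Real.sqrt τ) := by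
    simp only [hB2, hTτ, hlog]
  rw [hB2T] at hfin
  have hcoef : ε * Real.log (t₀ / τ) ≤ (1 + Real.sqrt 2) / 2 * ε * Real.log (t₀ / τ) := by
    have h1 : (1:ℝ) ≤ (1 + Real.sqrt 2) / 2 := by linarith
    calc ε * Real.log (t₀ / τ) = 1 * (ε * Real.log (t₀ / τ)) := by ring
      _ ≤ (1 + Real.sqrt 2) / 2 * (ε * Real.log (t₀ / τ)) :=
          mul_le_mul_of_nonneg_right h1 (mul_nonneg hε hlognn)
      _ = (1 + Real.sqrt 2) / 2 * ε * Real.log (t₀ / τ) := by ring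
  calc ‖X T - X 0‖ ≤ ε * Real.log (t₀ / τ) + c * (Real.sqrt t₀ - Real.sqrt τ) := hfin
    _ ≤ (1 + Real.sqrt 2) / 2 * ε * Real.log (t₀ / τ) + d0 := by linarith
    _ = d0 + (1 + Real.sqrt 2) / 2 * ε * Real.log (t₀ / τ) := by ring
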